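/- Let j: ℝ → ℝ be a smooth, even, nonnegative mollifier supported in (-1,1) with ∫j = 1, and j_δ(t) = δ⁻¹ j(t/δ). Let H be a Hilbert space and u, v ∈ L^∞(0,T;H) weakly continuous in time with weak limits at 0 and T. Extend u, v constantly outside [0,T] and set u_δ = u * j_δ, v_δ = v * j_δ. Then for all t ∈ [0,T], lim_{δ→0} ∫₀ᵗ (u, v_δ) − (u_δ, v) dτ = 0. -/

import Mathlib

open MeasureTheory Filter intervalIntegral RealInnerProductSpace

/-- The constant-in-time extension of `u : ℝ → H` outside `[0,T]`. -/
noncomputable def extendT {H : Type*} (T : ℝ) (u : ℝ → H) : ℝ → H :=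
  fun t => u (max 0 (min t T))

/-- The rescaled mollifier `j_δ(t) = δ⁻¹ j(t/δ)`. -/
noncomputable def mollK (j : ℝ → ℝ) (δ t : ℝ) : ℝ := δ⁻¹ * j (t / δ)

/-- Mollification in time of the constant extension of `u`. -/
noncomputable def mollT {H : Type*} [NormedAddCommGroup H] [NormedSpace ℝ H]
    (T : ℝ) (j : ℝ → ℝ) (u : ℝ → H) (δ t : ℝ) : H :=
  ∫ s : ℝ, mollK j δ (t - s) • extendT T u s

section MollK
variable {j : ℝ → ℝ} {δ : ℝ}

theorem mollK_cont (hjc : Continuous j) (hδ : 0 < δ) : Continuous (mollK j δ) :=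
  continuous_const.mul (hjc.comp (continuous_id.div_const δ))

theorem mollK_nonneg (hj : ∀ t, 0 ≤ j t) (hδ : 0 < δ) (x : ℝ) : 0 ≤ mollK j δ x :=
  mul_nonneg (inv_nonneg.mpr hδ.le) (hj _)

theorem mollK_eq_zero (hsupp : Function.support j ⊆ Set.Ioo (-1:ℝ) 1) (hδ : 0 < δ)
    {x : ℝ} (hx : δ ≤ |x|) : mollK j δ x = 0 := by
  have : j (x / δ) = 0 := by
    by_contra h
    have := hsupp h
    rw [Set.mem_Ioo] at this
    have habs : |x / δ| < 1 := abs_lt.mpr this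
    rw [abs_div, abs_of_pos hδ, div_lt_one hδ] at habs
    linarith
  simp [mollK, this]

theorem mollK_even (hje : ∀ t, j (-t) = j t) (τ s : ℝ) :
    mollK j δ (s - τ) = mollK j δ (τ - s) := by
  unfold mollK
  rw [show (s - τ) / δ = -((τ - s) / δ) by ring, hje]

theorem mollK_le (hj : ∀ t, 0 ≤ j t) {C : ℝ} (hC : ∀ x, j x ≤ C) (hδ : 0 < δ) (x : ℝ) :
    mollK j δ x ≤ δ⁻¹ * C :=
  mul_le_mul_of_nonneg_left (hC _) (inv_nonneg.mpr hδ.le)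

theorem mollK_integrable (hjc : Continuous j) (hsupp : Function.support j ⊆ Set.Ioo (-1:ℝ) 1)
    (hδ : 0 < δ) (τ : ℝ) : Integrable (fun s => mollK j δ (τ - s)) := by
  refine (Continuous.integrable_of_hasCompactSupport
    ((mollK_cont hjc hδ).comp (continuous_const.sub continuous_id)) ?_)
  refine HasCompactSupport.intro (isCompact_Icc (a := τ - δ) (b := τ + δ)) ?_
  intro x hx
  simp only [Function.comp, Set.mem_Icc, not_and_or, not_le] at hx ⊢
  apply mollK_eq_zero hsupp hδ
  rcases hx with h | h
  · rw [abs_of_pos (by linarith)]; linarith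
  · rw [abs_of_neg (by linarith)]; linarith

theorem mollK_total (hjc : Continuous j) (hj_int : (∫ t : ℝ, j t) = 1) (hδ : 0 < δ) (τ : ℝ) :
    (∫ s : ℝ, mollK j δ (τ - s)) = 1 := by
  have h1 : (∫ s : ℝ, mollK j δ (τ - s)) = ∫ x : ℝ, mollK j δ x :=
    integral_sub_left_eq_self (mollK j δ) volume τ
  rw [h1]
  unfold mollK
  rw [MeasureTheory.integral_const_mul, MeasureTheory.Measure.integral_comp_div (g := j) (a := δ), hj_int,
    abs_of_pos hδ]
  simp [ne_of_gt hδ]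

theorem moll_smul_integrable (hjc : Continuous j) (hjnn : ∀ t, 0 ≤ j t)
    (hsupp : Function.support j ⊆ Set.Ioo (-1:ℝ) 1) (hδ : 0 < δ) (τ : ℝ)
    {H : Type*} [NormedAddCommGroup H] [NormedSpace ℝ H]
    {w : ℝ → H} (hwm : StronglyMeasurable w) {M : ℝ} (hM : ∀ s, ‖w s‖ ≤ M) :
    Integrable (fun s => mollK j δ (τ - s) • w s) := by
  have hk := mollK_integrable hjc hsupp hδ τ
  refine Integrable.mono' (hk.const_mul M) ?_ ?_
  · exact ((((mollK_cont hjc hδ).comp (continuous_const.sub continuous_id) :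
      Continuous fun s => mollK j δ (τ - s))).stronglyMeasurable.smul
      hwm).aestronglyMeasurable
  · refine Filter.Eventually.of_forall fun s => ?_
    rw [norm_smul, Real.norm_eq_abs, abs_of_nonneg (mollK_nonneg hjnn hδ _)]
    calc mollK j δ (τ - s) * ‖w s‖ ≤ mollK j δ (τ - s) * M :=
          mul_le_mul_of_nonneg_left (hM s) (mollK_nonneg hjnn hδ _)
      _ = M * mollK j δ (τ - s) := mul_comm _ _

/-- inner product against a mollification -/
theorem inner_mollT {H : Type*} [NormedAddCommGroup H] [InnerProductSpace ℝ H]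
    [CompleteSpace H]
    (hjc : Continuous j) (hjnn : ∀ t, 0 ≤ j t)
    (hsupp : Function.support j ⊆ Set.Ioo (-1:ℝ) 1) (hδ : 0 < δ)
    (T : ℝ) (w : ℝ → H) (hwm : StronglyMeasurable (extendT T w))
    {M : ℝ} (hM : ∀ s, ‖extendT T w s‖ ≤ M) (φ : H) (τ : ℝ) :
    ⟪φ, mollT T j w δ τ⟫ = ∫ s : ℝ, mollK j δ (τ - s) * ⟪φ, extendT T w s⟫ := by
  rw [mollT, ← integral_inner (moll_smul_integrable hjc hjnn hsupp hδ τ hwm hM) φ]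
  simp only [real_inner_smul_right]

end MollK
theorem wc_stronglyMeasurable
    {H : Type*} [NormedAddCommGroup H] [InnerProductSpace ℝ H] [CompleteSpace H]
    (w : ℝ → H) (hw : ∀ φ : H, Continuous fun t : ℝ => ⟪w t, φ⟫) :
    StronglyMeasurable w := by
  classical
  -- countable dense-domain values
  let e : ℕ → ℚ := (Denumerable.eqv ℚ).symm
  -- finite dimensional approximating subspaces
  let F : ℕ → Submodule ℝ H := fun n => Submodule.span ℝ ((fun k => w (e k)) '' Set.Iio n)
  have hFfin : ∀ n, FiniteDimensional ℝ (F n) := fun n =>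
    FiniteDimensional.span_of_finite ℝ ((Set.finite_Iio n).image _)
  have hFmono : Monotone F := fun m n hmn =>
    Submodule.span_mono (Set.image_mono (Set.Iio_subset_Iio hmn))
  -- the closure of the span of all rational values
  let V : Submodule ℝ H := (Submodule.span ℝ (Set.range fun q : ℚ => w (q : ℝ))).topologicalClosure
  have hVclosed : IsClosed (V : Set H) := Submodule.isClosed_topologicalClosure _
  haveI : CompleteSpace V := hVclosed.completeSpace_coe
  have hwV : ∀ t, w t ∈ V := by
    intro t
    have hsub : w t - (Submodule.orthogonalProjectionOnto V (w t) : H) ∈ Vᗮ :=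
      Submodule.sub_starProjection_mem_orthogonal (K := V) (w t)
    set d := w t - (Submodule.orthogonalProjectionOnto V (w t) : H) with hd
    have hq : ∀ q : ℚ, ⟪w (q : ℝ), d⟫ = 0 := by
      intro q
      have hmem : w (q : ℝ) ∈ V :=
        Submodule.le_topologicalClosure _ (Submodule.subset_span ⟨q, rfl⟩)
      exact real_inner_comm d _ ▸ (Submodule.mem_orthogonal' V d).mp hsub _ hmem
    have h0 : ⟪w t, d⟫ = 0 := by
      have : Set.EqOn (fun s : ℝ => ⟪w s, d⟫) (fun _ => (0:ℝ)) (Set.range ((↑) : ℚ → ℝ)) := by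
        rintro x ⟨q, rfl⟩; exact hq q
      have := Continuous.ext_on Rat.denseRange_cast (hw d) continuous_const this
      exact congrFun this t
    have hP : ⟪(Submodule.orthogonalProjectionOnto V (w t) : H), d⟫ = 0 := by
      have hmem : (Submodule.orthogonalProjectionOnto V (w t) : H) ∈ V := (Submodule.orthogonalProjectionOnto V (w t)).2
      exact real_inner_comm d _ ▸ (Submodule.mem_orthogonal' V d).mp hsub _ hmem
    have : ⟪d, d⟫ = 0 := by
      rw [hd, inner_sub_left, h0, hP, sub_zero]
    have hd0 : d = 0 := by rwa [inner_self_eq_zero] at this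
    have := sub_eq_zero.mp hd0
    rw [this]; exact (Submodule.orthogonalProjectionOnto V (w t)).2
  -- the finite-dimensional projections of `w`
  have key : ∀ n, Continuous fun t => (Submodule.orthogonalProjectionOnto (F n) (w t) : H) := by
    intro n
    haveI := hFfin n
    let b := stdOrthonormalBasis ℝ (F n)
    have heq : ∀ t, (Submodule.orthogonalProjectionOnto (F n) (w t) : H)
        = ∑ i, ⟪w t, (b i : H)⟫ • (b i : H) := by
      intro t
      rw [b.orthogonalProjectionOnto_apply_eq_sum (w t)]
      push_cast
      refine Finset.sum_congr rfl fun i _ => ?_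
      rw [real_inner_comm]
    simp only [heq]
    exact continuous_finset_sum _ fun i _ => (hw _).smul continuous_const
  have hconv : ∀ t, Tendsto (fun n => (Submodule.orthogonalProjectionOnto (F n) (w t) : H))
      atTop (nhds (w t)) := by
    intro t
    rw [Metric.tendsto_atTop]
    intro ε hε
    -- find a good approximation in some `F m`
    have hmem : w t ∈ closure (Submodule.span ℝ (Set.range fun q : ℚ => w (q : ℝ)) : Set H) :=
      hwV t
    rw [Metric.mem_closure_iff] at hmem
    obtain ⟨y, hy, hdy⟩ := hmem ε hε
    -- `y` lies in some `F m`
    have hy' : ∃ m, y ∈ F m := by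
      have hrange : (Set.range fun q : ℚ => w (q : ℝ)) = ⋃ n, ((fun k => w (e k)) '' Set.Iio n) := by
        ext x
        constructor
        · rintro ⟨q, rfl⟩
          refine Set.mem_iUnion.mpr ⟨(Denumerable.eqv ℚ) q + 1, ⟨(Denumerable.eqv ℚ) q, ?_, ?_⟩⟩
          · exact Nat.lt_succ_self _
          · simp [e]
        · rintro ⟨_, ⟨n, rfl⟩, ⟨k, _, rfl⟩⟩
          exact ⟨e k, rfl⟩
      have hspan : Submodule.span ℝ (Set.range fun q : ℚ => w (q : ℝ)) = ⨆ n, F n := by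
        rw [hrange, Submodule.span_iUnion]
      rw [hspan] at hy
      exact (Submodule.mem_iSup_of_directed _ (hFmono.directed_le)).mp hy
    obtain ⟨m, hym⟩ := hy'
    refine ⟨m, fun n hn => ?_⟩
    have hymn : y ∈ F n := hFmono hn hym
    have hle : ‖w t - (Submodule.orthogonalProjectionOnto (F n) (w t) : H)‖ ≤ ‖w t - y‖ := by
      rw [← Submodule.starProjection_apply, Submodule.starProjection_minimal]
      exact ciInf_le ⟨0, fun r ⟨x, hx⟩ => hx ▸ norm_nonneg _⟩ (⟨y, hymn⟩ : F n)
    calc dist (Submodule.orthogonalProjectionOnto (F n) (w t) : H) (w t)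
        = ‖w t - (Submodule.orthogonalProjectionOnto (F n) (w t) : H)‖ := by
          rw [dist_eq_norm, norm_sub_rev]
      _ ≤ ‖w t - y‖ := hle
      _ = dist (w t) y := (dist_eq_norm _ _).symm
      _ < ε := hdy
  exact stronglyMeasurable_of_tendsto atTop
    (fun n => ((key n).stronglyMeasurable)) (tendsto_pi_nhds.mpr hconv)

theorem stmt0
    {H : Type*} [NormedAddCommGroup H] [InnerProductSpace ℝ H] [CompleteSpace H]
    (T : ℝ) (hT : 0 < T)
    (j : ℝ → ℝ)
    (hj_smooth : ContDiff ℝ (⊤ : ℕ∞) j)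
    (hj_even : ∀ t, j (-t) = j t)
    (hj_nonneg : ∀ t, 0 ≤ j t)
    (hj_supp : Function.support j ⊆ Set.Ioo (-1 : ℝ) 1)
    (hj_int : (∫ t : ℝ, j t) = 1)
    (hj_mono : ∀ t : ℝ, 0 ≤ t → deriv j t ≤ 0)
    (u v : ℝ → H)
    (hu_bdd : ∃ M, ∀ t, ‖u t‖ ≤ M)
    (hv_bdd : ∃ M, ∀ t, ‖v t‖ ≤ M)
    -- weak continuity on `[0,T]` together with weak limits at the endpoints,
    -- encoded via the constant extension:
    (hu_wc : ∀ φ : H, Continuous fun t : ℝ => ⟪extendT T u t, φ⟫)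
    (hv_wc : ∀ φ : H, Continuous fun t : ℝ => ⟪extendT T v t, φ⟫) :
    ∀ t ∈ Set.Icc (0 : ℝ) T,
      Tendsto
        (fun δ : ℝ =>
          ∫ τ in (0 : ℝ)..t,
            (⟪u τ, mollT T j v δ τ⟫ - ⟪mollT T j u δ τ, v τ⟫))
        (nhdsWithin 0 (Set.Ioi 0)) (nhds 0) := by
  intro t ht
  obtain ⟨Mu, hMu⟩ := hu_bdd
  obtain ⟨Mv, hMv⟩ := hv_bdd
  have hMu0 : 0 ≤ Mu := le_trans (norm_nonneg _) (hMu 0)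
  have hMv0 : 0 ≤ Mv := le_trans (norm_nonneg _) (hMv 0)
  set ub := extendT T u with hub
  set vb := extendT T v with hvb
  have hubm : StronglyMeasurable ub := wc_stronglyMeasurable _ hu_wc
  have hvbm : StronglyMeasurable vb := wc_stronglyMeasurable _ hv_wc
  have hubbd : ∀ s, ‖ub s‖ ≤ Mu := fun s => hMu _
  have hvbbd : ∀ s, ‖vb s‖ ≤ Mv := fun s => hMv _
  have hjc : Continuous j := hj_smooth.continuous
  set K := 2 * (Mu * Mv) with hKdef
  have hK0 : 0 ≤ K := by positivity
  set S : Set ℝ := Set.Ioc (0:ℝ) t with hSdef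
  have hSm : MeasurableSet S := measurableSet_Ioc
  have hSfin : volume S < ⊤ := measure_Ioc_lt_top
  set g : ℝ → ℝ → ℝ := fun τ s => ⟪ub τ, vb s⟫ - ⟪ub s, vb τ⟫ with hgdef
  have hg_bd : ∀ τ s, |g τ s| ≤ K := by
    intro τ s
    have h1 : |(⟪ub τ, vb s⟫ : ℝ)| ≤ Mu * Mv :=
      (abs_real_inner_le_norm _ _).trans (mul_le_mul (hubbd τ) (hvbbd s) (norm_nonneg _) hMu0)
    have h2 : |(⟪ub s, vb τ⟫ : ℝ)| ≤ Mu * Mv :=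
      (abs_real_inner_le_norm _ _).trans (mul_le_mul (hubbd s) (hvbbd τ) (norm_nonneg _) hMu0)
    calc |g τ s| ≤ |(⟪ub τ, vb s⟫ : ℝ)| + |(⟪ub s, vb τ⟫ : ℝ)| := abs_sub _ _
      _ ≤ K := by rw [hKdef]; linarith
  have hg_anti : ∀ τ s, g s τ = - g τ s := by
    intro τ s; simp only [hgdef]; ring
  have hgm : StronglyMeasurable (fun p : ℝ × ℝ => g p.1 p.2) :=
    ((hubm.comp_measurable measurable_fst).inner (hvbm.comp_measurable measurable_snd)).sub
      ((hubm.comp_measurable measurable_snd).inner (hvbm.comp_measurable measurable_fst))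
  -- the key quantitative bound
  have hbound : ∀ δ : ℝ, 0 < δ →
      ‖∫ τ in (0 : ℝ)..t, (⟪u τ, mollT T j v δ τ⟫ - ⟪mollT T j u δ τ, v τ⟫)‖
        ≤ 2 * K * δ := by
    intro δ hδ
    set G : ℝ → ℝ → ℝ := fun τ s => mollK j δ (τ - s) * g τ s with hGdef
    have hkint : ∀ τ, Integrable (fun s => mollK j δ (τ - s)) :=
      mollK_integrable hjc hj_supp hδ
    have hGm : StronglyMeasurable (Function.uncurry G) :=
      (((mollK_cont hjc hδ).comp (continuous_fst.sub continuous_snd) :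
        Continuous fun p : ℝ × ℝ => mollK j δ (p.1 - p.2)).stronglyMeasurable).mul hgm
    have hGτm : ∀ τ, StronglyMeasurable (G τ) := fun τ =>
      hGm.comp_measurable (measurable_const.prodMk measurable_id)
    have hGτbd : ∀ τ s, ‖G τ s‖ ≤ K * mollK j δ (τ - s) := by
      intro τ s
      rw [hGdef]
      simp only [Real.norm_eq_abs, abs_mul, abs_of_nonneg (mollK_nonneg hj_nonneg hδ (τ - s))]
      calc mollK j δ (τ - s) * |g τ s| ≤ mollK j δ (τ - s) * K :=
            mul_le_mul_of_nonneg_left (hg_bd τ s) (mollK_nonneg hj_nonneg hδ _)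
        _ = K * mollK j δ (τ - s) := mul_comm _ _
    have hGτint : ∀ τ, Integrable (G τ) := by
      intro τ
      refine Integrable.mono' ((hkint τ).const_mul K) (hGτm τ).aestronglyMeasurable ?_
      exact Filter.Eventually.of_forall (hGτbd τ)
    have hnormle : ∀ τ, (∫ s, ‖G τ s‖) ≤ K := by
      intro τ
      calc (∫ s, ‖G τ s‖) ≤ ∫ s, K * mollK j δ (τ - s) :=
            integral_mono (hGτint τ).norm ((hkint τ).const_mul K) (hGτbd τ)
        _ = K * ∫ s, mollK j δ (τ - s) := MeasureTheory.integral_const_mul _ _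
        _ = K := by rw [mollK_total hjc hj_int hδ τ, mul_one]
    -- integrability on the product
    have P1 : Integrable (Function.uncurry G) ((volume.restrict S).prod volume) := by
      rw [integrable_prod_iff hGm.aestronglyMeasurable]
      constructor
      · exact Filter.Eventually.of_forall fun τ => hGτint τ
      · refine Integrable.mono' (g := fun _ => K) (integrableOn_const hSfin.ne)
          (hGm.norm.aestronglyMeasurable.integral_prod_right') ?_
        refine Filter.Eventually.of_forall fun τ => ?_
        rw [Real.norm_eq_abs, abs_of_nonneg (integral_nonneg fun s => norm_nonneg _)]
        exact hnormle τ
    have hprodS : (volume.restrict S).prod (volume.restrict S)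
        = ((volume.restrict S).prod volume).restrict (Set.univ ×ˢ S) := by
      rw [← Measure.prod_restrict, Measure.restrict_univ]
    have hprodSc : (volume.restrict S).prod (volume.restrict Sᶜ)
        = ((volume.restrict S).prod volume).restrict (Set.univ ×ˢ Sᶜ) := by
      rw [← Measure.prod_restrict, Measure.restrict_univ]
    have P2 : Integrable (Function.uncurry G) ((volume.restrict S).prod (volume.restrict S)) := by
      rw [hprodS]; exact P1.restrict
    have P3 : Integrable (Function.uncurry G)
        ((volume.restrict S).prod (volume.restrict Sᶜ)) := by
      rw [hprodSc]; exact P1.restrict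
    have hAint : Integrable (fun τ => ∫ s in S, G τ s) (volume.restrict S) :=
      P2.integral_prod_left
    have hBint : Integrable (fun τ => ∫ s in Sᶜ, G τ s) (volume.restrict S) :=
      P3.integral_prod_left
    -- the symmetric part vanishes
    have hGanti : ∀ τ s, G s τ = - G τ s := by
      intro τ s
      rw [hGdef]
      simp only
      rw [mollK_even hj_even, hg_anti]
      ring
    have hA0 : (∫ τ in S, ∫ s in S, G τ s) = 0 := by
      have h1 : (∫ τ in S, ∫ s in S, G τ s) = ∫ s in S, ∫ τ in S, G τ s :=
        integral_integral_swap P2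
      have h2 : ∀ s, (∫ τ in S, G τ s) = - ∫ τ in S, G s τ := by
        intro s
        calc (∫ τ in S, G τ s) = ∫ τ in S, -(G s τ) :=
              integral_congr_ae (Filter.Eventually.of_forall fun τ => hGanti s τ)
          _ = - ∫ τ in S, G s τ := MeasureTheory.integral_neg _
      have h3 : (∫ s in S, ∫ τ in S, G τ s) = - ∫ s in S, ∫ τ in S, G s τ :=
        calc (∫ s in S, ∫ τ in S, G τ s) = ∫ s in S, -(∫ τ in S, G s τ) :=
              integral_congr_ae (Filter.Eventually.of_forall h2)
          _ = - ∫ s in S, ∫ τ in S, G s τ := MeasureTheory.integral_neg _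
      have := h1.trans h3
      linarith [this]
    -- rewrite the interval integral
    have hF : (∫ τ in (0 : ℝ)..t, (⟪u τ, mollT T j v δ τ⟫ - ⟪mollT T j u δ τ, v τ⟫))
        = ∫ τ in S, ((∫ s in S, G τ s) + ∫ s in Sᶜ, G τ s) := by
      rw [intervalIntegral.integral_of_le ht.1]
      refine setIntegral_congr_fun hSm fun τ hτ => ?_
      obtain ⟨hτ0, hτt⟩ := hτ
      have hτT : τ ≤ T := le_trans hτt ht.2
      have huτ : u τ = ub τ := by
        rw [hub]; unfold extendT; rw [min_eq_left hτT, max_eq_right hτ0.le]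
      have hvτ : v τ = vb τ := by
        rw [hvb]; unfold extendT; rw [min_eq_left hτT, max_eq_right hτ0.le]
      have I1 : Integrable (fun s => mollK j δ (τ - s) * ⟪ub τ, vb s⟫) := by
        have := moll_smul_integrable (H := ℝ) hjc hj_nonneg hj_supp hδ τ
          (w := fun s => (⟪ub τ, vb s⟫ : ℝ)) (stronglyMeasurable_const.inner hvbm)
          (M := Mu * Mv) (fun s => by
            rw [Real.norm_eq_abs]
            exact (abs_real_inner_le_norm _ _).trans
              (mul_le_mul (hubbd τ) (hvbbd s) (norm_nonneg _) hMu0))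
        simpa [smul_eq_mul] using this
      have I2 : Integrable (fun s => mollK j δ (τ - s) * ⟪vb τ, ub s⟫) := by
        have := moll_smul_integrable (H := ℝ) hjc hj_nonneg hj_supp hδ τ
          (w := fun s => (⟪vb τ, ub s⟫ : ℝ)) (stronglyMeasurable_const.inner hubm)
          (M := Mu * Mv) (fun s => by
            rw [Real.norm_eq_abs]
            refine (abs_real_inner_le_norm _ _).trans ?_
            rw [mul_comm Mu Mv]
            exact mul_le_mul (hvbbd τ) (hubbd s) (norm_nonneg _) hMv0)
        simpa [smul_eq_mul] using this
      have e1 : (⟪u τ, mollT T j v δ τ⟫ : ℝ)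
          = ∫ s, mollK j δ (τ - s) * ⟪ub τ, vb s⟫ := by
        rw [huτ]
        exact inner_mollT hjc hj_nonneg hj_supp hδ T v hvbm hvbbd (ub τ) τ
      have e2 : (⟪mollT T j u δ τ, v τ⟫ : ℝ)
          = ∫ s, mollK j δ (τ - s) * ⟪vb τ, ub s⟫ := by
        rw [hvτ, real_inner_comm]
        exact inner_mollT hjc hj_nonneg hj_supp hδ T u hubm hubbd (vb τ) τ
      rw [e1, e2, ← integral_sub I1 I2]
      have e3 : (∫ s, (mollK j δ (τ - s) * ⟪ub τ, vb s⟫ - mollK j δ (τ - s) * ⟪vb τ, ub s⟫))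
          = ∫ s, G τ s := by
        refine integral_congr_ae (Filter.Eventually.of_forall fun s => ?_)
        rw [hGdef]
        simp only [hgdef]
        rw [real_inner_comm (vb τ) (ub s)]
        ring
      rw [e3, ← integral_add_compl hSm (hGτint τ)]
    rw [hF, integral_add hAint hBint, hA0, zero_add]
    -- bound the boundary part
    set Bf : ℝ → ℝ := fun τ => ∫ s in Sᶜ, G τ s with hBfdef
    have hBf_bd : ∀ τ, ‖Bf τ‖ ≤ K := by
      intro τ
      refine (MeasureTheory.norm_integral_le_integral_norm _).trans ?_
      calc (∫ s in Sᶜ, ‖G τ s‖) ≤ ∫ s, ‖G τ s‖ :=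
            setIntegral_le_integral (hGτint τ).norm
              (Filter.Eventually.of_forall fun s => norm_nonneg _)
        _ ≤ K := hnormle τ
    have hBf_zero : ∀ τ, δ ≤ τ → τ ≤ t - δ → Bf τ = 0 := by
      intro τ h1 h2
      show (∫ s in Sᶜ, G τ s) = 0
      have : Set.EqOn (G τ) (fun _ => (0:ℝ)) Sᶜ := by
        intro s hs
        rw [hSdef] at hs
        simp only [Set.mem_compl_iff, Set.mem_Ioc, not_and_or, not_lt, not_le] at hs
        have hzero : mollK j δ (τ - s) = 0 := by
          refine mollK_eq_zero hj_supp hδ ?_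
          rcases hs with h | h
          · rw [abs_of_nonneg (by linarith)]; linarith
          · rw [abs_of_nonpos (by linarith)]; linarith
        simp only [hGdef]
        rw [hzero, zero_mul]
      rw [setIntegral_congr_fun hSm.compl this, MeasureTheory.integral_zero]
    -- the effective region
    have hindic : ∀ τ ∈ S, Bf τ = (Set.Icc δ (t - δ))ᶜ.indicator Bf τ := by
      intro τ hτ
      by_cases hmem : τ ∈ (Set.Icc δ (t - δ))ᶜ
      · rw [Set.indicator_of_mem hmem]
      · rw [Set.indicator_of_notMem hmem]
        simp only [Set.mem_compl_iff, not_not] at hmem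
        exact hBf_zero τ hmem.1 hmem.2
    calc ‖∫ τ in S, Bf τ‖
        = ‖∫ τ in S, (Set.Icc δ (t - δ))ᶜ.indicator Bf τ‖ := by
          rw [setIntegral_congr_fun hSm hindic]
      _ = ‖∫ τ in S ∩ (Set.Icc δ (t - δ))ᶜ, Bf τ‖ := by
          rw [setIntegral_indicator measurableSet_Icc.compl]
      _ ≤ K * (volume (S ∩ (Set.Icc δ (t - δ))ᶜ)).toReal := by
          refine norm_setIntegral_le_of_norm_le_const ?_
            fun τ _ => hBf_bd τ
          exact lt_of_le_of_lt (measure_mono Set.inter_subset_left) hSfin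
      _ ≤ 2 * K * δ := by
          have hsub : S ∩ (Set.Icc δ (t - δ))ᶜ ⊆ Set.Ioo 0 δ ∪ Set.Ioc (t - δ) t := by
            rintro τ ⟨⟨hτ0, hτt⟩, hτc⟩
            simp only [Set.mem_compl_iff, Set.mem_Icc, not_and_or, not_le] at hτc
            rcases hτc with h | h
            · exact Or.inl ⟨hτ0, h⟩
            · exact Or.inr ⟨h, hτt⟩
          have hm1 : volume (S ∩ (Set.Icc δ (t - δ))ᶜ) ≤ ENNReal.ofReal (2 * δ) := by
            refine le_trans (measure_mono hsub) ?_
            refine le_trans (measure_union_le _ _) ?_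
            rw [Real.volume_Ioo, Real.volume_Ioc]
            rw [show t - (t - δ) = δ by ring, show δ - 0 = δ by ring]
            rw [← ENNReal.ofReal_add hδ.le hδ.le]
            exact le_of_eq (by ring_nf)
          have hm2 : (volume (S ∩ (Set.Icc δ (t - δ))ᶜ)).toReal ≤ 2 * δ :=
            ENNReal.toReal_le_of_le_ofReal (by positivity) hm1
          calc K * (volume (S ∩ (Set.Icc δ (t - δ))ᶜ)).toReal ≤ K * (2 * δ) :=
                mul_le_mul_of_nonneg_left hm2 hK0
            _ = 2 * K * δ := by ring
  -- conclude by squeezing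
  refine squeeze_zero_norm' (a := fun δ => 2 * K * δ) ?_ ?_
  · filter_upwards [self_mem_nhdsWithin] with δ hδ
    exact hbound δ hδ
  · have hcont : Tendsto (fun δ : ℝ => 2 * K * δ) (nhds 0) (nhds 0) := by
      have hc : Continuous fun δ : ℝ => 2 * K * δ := by continuity
      simpa using hc.tendsto 0
    exact hcont.mono_left nhdsWithin_le_nhds
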